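/- Let (X,d) be a complete metric space and (f_i)_{i∈I} a finite family of continuous self-maps of X such that there exists C ∈ [0,1) with d(f_i(y), f_i(z)) ≤ C·d(y,z) for all i ∈ I, all x ∈ X, and all y,z in the orbit O(x). Then the associated fractal operator F(K) = ⋃_{i∈I} f_i(K) on the space of nonempty compact subsets of X with the Hausdorff metric is a weakly Picard operator: for every compact K, the sequence F^[n](K) converges in the Hausdorff metric and its limit is a fixed point of F. -/

import Mathlib

open Metric Filter Topology Set

/-- The orbit of a point `x` under the family of maps `f i`:
`x` together with all images of `x` under finite compositions of the `f i`. -/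
def orbitIFS {X I : Type*} (f : I → X → X) (x : X) : Set X :=
  ⋃ l : List I, {l.foldr (fun i y => f i y) x}

/-- The fractal (Hutchinson–Barnsley) operator `K ↦ ⋃ i, f i '' K`. -/
def fractalOp {X I : Type*} (f : I → X → X) (K : Set X) : Set X :=
  ⋃ i, f i '' K

/-- Image of a fuzzy set under a map: `f(u)(y) = sup_{x ∈ f⁻¹ y} u x` (0 if empty). -/
noncomputable def fuzzyImage {X : Type*} (g : X → X) (u : X → ℝ) : X → ℝ :=
  fun y => sSup (u '' (g ⁻¹' {y}))

/-- The fuzzy Hutchinson–Barnsley operator `Z(u) = ∨ i, ρ i (f i (u))`. -/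
noncomputable def Zop {X I : Type*} (f : I → X → X) (ρ : I → ℝ → ℝ) (u : X → ℝ) : X → ℝ :=
  fun y => ⨆ i, ρ i (fuzzyImage (f i) u y)

/-- The metric `d_∞(u,v) = sup_{α ∈ (0,1]} h([u]^α, [v]^α)`. -/
noncomputable def dInfty {X : Type*} [MetricSpace X] (u v : X → ℝ) : ℝ :=
  ⨆ α : Ioc (0:ℝ) 1, hausdorffDist {x | (α:ℝ) ≤ u x} {x | (α:ℝ) ≤ v x}

/-- The support of a fuzzy set: the closure of `{x | 0 < u x}`. -/
def fsupp {X : Type*} [MetricSpace X] (u : X → ℝ) : Set X := closure {x | 0 < u x}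

/-- The crisp fuzzy point `δ_s`. -/
def fdelta {X : Type*} [DecidableEq X] (s : X) : X → ℝ := fun t => if t = s then 1 else 0

/-- `u^x` : the restriction of `u` to the closure of the orbit of `w` (zero outside). -/
noncomputable def restrictO {X I : Type*} [MetricSpace X] (f : I → X → X) (u : X → ℝ)
    (w : X) : X → ℝ :=
  (closure (orbitIFS f w)).indicator u

/-- A normal compactly supported fuzzy set (with values in `[0,1]`). -/
def IsFuzzyN {X : Type*} [MetricSpace X] (u : X → ℝ) : Prop :=
  (∀ x, u x ∈ Icc (0:ℝ) 1) ∧ (∃ x, u x = 1) ∧ IsCompact (fsupp u)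

/-- An upper semicontinuous normal compactly supported fuzzy set: membership in `F*_X`. -/
def IsFuzzyStar {X : Type*} [MetricSpace X] (u : X → ℝ) : Prop :=
  IsFuzzyN u ∧ UpperSemicontinuous u

/-- Membership in `F*_S`: for each point of positive membership there is an orbit
containing it together with a point of membership one. -/
def InFS {X I : Type*} [MetricSpace X] (f : I → X → X) (u : X → ℝ) : Prop :=
  IsFuzzyStar u ∧ ∀ x, 0 < u x → ∃ w y, x ∈ orbitIFS f w ∧ y ∈ orbitIFS f w ∧ u y = 1

/-- The orbital contraction condition. -/
def OrbitalContr {X I : Type*} [MetricSpace X] (f : I → X → X) (C : ℝ) : Prop :=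
  ∀ i x, ∀ y ∈ orbitIFS f x, ∀ z ∈ orbitIFS f x, dist (f i y) (f i z) ≤ C * dist y z

/-- An admissible system of grey level maps. -/
def Admissible {I : Type*} (ρ : I → ℝ → ℝ) : Prop :=
  (∀ i, ρ i 0 = 0) ∧ (∀ i, MonotoneOn (ρ i) (Icc (0:ℝ) 1)) ∧
  (∀ i, ∀ t ∈ Icc (0:ℝ) 1, ContinuousWithinAt (ρ i) (Ici t) t) ∧
  (∀ i, ∀ t ∈ Icc (0:ℝ) 1, ρ i t ∈ Icc (0:ℝ) 1) ∧ (∃ j, ρ j 1 = 1)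

section AuxOrbit

open TopologicalSpace

variable {X I : Type*} [MetricSpace X] (f : I → X → X)

lemma apply_mem_orbitIFS (l : List I) (x : X) :
    l.foldr (fun i y => f i y) x ∈ orbitIFS f x :=
  Set.mem_iUnion.2 ⟨l, rfl⟩

lemma orbitIFS_apply {x y : X} (hy : y ∈ orbitIFS f x) (l : List I) :
    l.foldr (fun i y => f i y) y ∈ orbitIFS f x := by
  rcases Set.mem_iUnion.1 hy with ⟨m, hm⟩
  rcases Set.mem_singleton_iff.1 hm with rfl
  rw [← List.foldr_append]
  exact apply_mem_orbitIFS f _ x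

lemma orbitIFS_lip {C : ℝ} (hC0 : 0 ≤ C) (horb : OrbitalContr f C) {x y z : X}
    (hy : y ∈ orbitIFS f x) (hz : z ∈ orbitIFS f x) (l : List I) :
    dist (l.foldr (fun i w => f i w) y) (l.foldr (fun i w => f i w) z)
      ≤ C ^ l.length * dist y z := by
  induction l with
  | nil => simp
  | cons i l ih =>
    have h1 : dist ((i :: l).foldr (fun i w => f i w) y) ((i :: l).foldr (fun i w => f i w) z)
        ≤ C * dist (l.foldr (fun i w => f i w) y) (l.foldr (fun i w => f i w) z) :=
      horb i x _ (orbitIFS_apply f hy l) _ (orbitIFS_apply f hz l)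
    calc dist ((i :: l).foldr (fun i w => f i w) y) ((i :: l).foldr (fun i w => f i w) z)
        ≤ C * (C ^ l.length * dist y z) :=
          h1.trans (mul_le_mul_of_nonneg_left ih hC0)
      _ = C ^ (i :: l).length * dist y z := by
          rw [List.length_cons, pow_succ]; ring

lemma mem_iterate_fractalOp (K : Set X) (n : ℕ) (p : X) :
    p ∈ (fractalOp f)^[n] K ↔
      ∃ l : List I, ∃ x ∈ K, l.length = n ∧ p = l.foldr (fun i y => f i y) x := by
  induction n generalizing p with
  | zero =>
    simp only [Function.iterate_zero, id_eq]
    constructor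
    · intro hp; exact ⟨[], p, hp, rfl, rfl⟩
    · rintro ⟨l, x, hx, hlen, rfl⟩
      rw [List.length_eq_zero_iff] at hlen
      subst hlen; exact hx
  | succ n ih =>
    rw [Function.iterate_succ_apply']
    simp only [fractalOp, Set.mem_iUnion, Set.mem_image]
    constructor
    · rintro ⟨i, q, hq, rfl⟩
      rcases (ih q).1 hq with ⟨l, x, hx, hlen, rfl⟩
      exact ⟨i :: l, x, hx, by simp [hlen], rfl⟩
    · rintro ⟨l, x, hx, hlen, rfl⟩
      cases l with
      | nil => simp at hlen
      | cons i l =>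
        exact ⟨i, _, (ih _).2 ⟨l, x, hx, Nat.succ_injective hlen, rfl⟩, rfl⟩

end AuxOrbit

/-- the fractal operator of an orbital IFS is weakly Picard on
nonempty compact sets with the Hausdorff metric. -/
theorem stmt0 {X I : Type*} [MetricSpace X] [CompleteSpace X] [Finite I] [Nonempty I]
    (f : I → X → X) (hcont : ∀ i, Continuous (f i))
    (C : ℝ) (hC0 : 0 ≤ C) (hC1 : C < 1) (horb : OrbitalContr f C)
    (K : Set X) (hKcp : IsCompact K) (hKne : K.Nonempty) :
    ∃ A : Set X, IsCompact A ∧ A.Nonempty ∧ fractalOp f A = A ∧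
      Tendsto (fun n => hausdorffDist ((fractalOp f)^[n] K) A) atTop (nhds 0) := by
  classical
  open TopologicalSpace in
  have hcomp : ∀ s : Set X, IsCompact s → IsCompact (fractalOp f s) := fun s hs =>
    isCompact_iUnion fun i => hs.image (hcont i)
  have hne : ∀ s : Set X, s.Nonempty → (fractalOp f s).Nonempty := by
    rintro s ⟨x, hx⟩
    exact ⟨f (Classical.arbitrary I) x,
      Set.mem_iUnion.2 ⟨Classical.arbitrary I, Set.mem_image_of_mem _ hx⟩⟩
  have hit : ∀ n : ℕ, IsCompact ((fractalOp f)^[n] K) ∧ ((fractalOp f)^[n] K).Nonempty := by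
    intro n
    induction n with
    | zero => exact ⟨hKcp, hKne⟩
    | succ n ih =>
      rw [Function.iterate_succ_apply']
      exact ⟨hcomp _ ih.1, hne _ ih.2⟩
  set T : TopologicalSpace.NonemptyCompacts X → TopologicalSpace.NonemptyCompacts X :=
    fun s => ⟨⟨fractalOp f s, hcomp _ s.isCompact⟩, hne _ s.nonempty⟩ with hT
  set u : ℕ → TopologicalSpace.NonemptyCompacts X :=
    fun n => ⟨⟨(fractalOp f)^[n] K, (hit n).1⟩, (hit n).2⟩ with hu
  have hTu : ∀ n, T (u n) = u (n + 1) := by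
    intro n
    apply TopologicalSpace.NonemptyCompacts.ext
    show fractalOp f ((fractalOp f)^[n] K) = (fractalOp f)^[n+1] K
    rw [Function.iterate_succ_apply']
  -- a uniform bound on the displacement of points of K
  obtain ⟨M, hM0, hMb⟩ : ∃ M : ℝ, 0 ≤ M ∧ ∀ i, ∀ x ∈ K, dist (f i x) x ≤ M := by
    have h1 : ∀ i : I, ∃ B : ℝ, ∀ x ∈ K, dist (f i x) x ≤ B := by
      intro i
      obtain ⟨x0, _, hmax⟩ := hKcp.exists_isMaxOn hKne
        (((hcont i).dist continuous_id).continuousOn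
          (s := K) (f := fun x => dist (f i x) x))
      exact ⟨dist (f i x0) x0, fun x hx => hmax hx⟩
    choose B hB using h1
    obtain ⟨i0, hi0⟩ := Finite.exists_max B
    exact ⟨max (B i0) 0, le_max_right _ _,
      fun i x hx => ((hB i x hx).trans (hi0 i)).trans (le_max_left _ _)⟩
  -- geometric estimate on consecutive iterates
  have key : ∀ n, dist (u n) (u (n + 1)) ≤ M * C ^ n := by
    intro n
    rw [Metric.NonemptyCompacts.dist_eq]
    have hr : (0:ℝ) ≤ M * C ^ n := mul_nonneg hM0 (pow_nonneg hC0 n)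
    apply hausdorffDist_le_of_mem_dist hr
    · -- from F^[n] K to F^[n+1] K
      intro q hq
      rcases (mem_iterate_fractalOp f K n q).1 hq with ⟨l, x, hx, hlen, rfl⟩
      set i0 := Classical.arbitrary I
      refine ⟨l.foldr (fun i y => f i y) (f i0 x), ?_, ?_⟩
      · refine (mem_iterate_fractalOp f K (n+1) _).2 ⟨l ++ [i0], x, hx, by simp [hlen], ?_⟩
        rw [List.foldr_append]
        rfl
      · have hlip := orbitIFS_lip f hC0 horb (apply_mem_orbitIFS f [] x)
          (apply_mem_orbitIFS f [i0] x) l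
        simp only [List.foldr_nil, List.foldr_cons] at hlip
        refine hlip.trans ?_
        rw [hlen, dist_comm]
        calc C ^ n * dist (f i0 x) x ≤ C ^ n * M :=
              mul_le_mul_of_nonneg_left (hMb i0 x hx) (pow_nonneg hC0 n)
          _ = M * C ^ n := mul_comm _ _
    · -- from F^[n+1] K to F^[n] K
      intro p hp
      rcases (mem_iterate_fractalOp f K (n+1) p).1 hp with ⟨l, x, hx, hlen, rfl⟩
      have hlne : l ≠ [] := by
        intro h; rw [h] at hlen; simp at hlen
      set i := l.getLast hlne with hi
      have hdec : l.dropLast ++ [i] = l := List.dropLast_append_getLast hlne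
      have hfold : l.foldr (fun i y => f i y) x
          = l.dropLast.foldr (fun i y => f i y) (f i x) := by
        conv_lhs => rw [← hdec]
        rw [List.foldr_append]
        rfl
      have hdl : l.dropLast.length = n := by
        rw [List.length_dropLast, hlen]; rfl
      refine ⟨l.dropLast.foldr (fun i y => f i y) x,
        (mem_iterate_fractalOp f K n _).2 ⟨l.dropLast, x, hx, hdl, rfl⟩, ?_⟩
      rw [hfold]
      have hlip := orbitIFS_lip f hC0 horb (apply_mem_orbitIFS f [i] x)
        (apply_mem_orbitIFS f [] x) l.dropLast
      simp only [List.foldr_nil, List.foldr_cons] at hlip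
      refine hlip.trans ?_
      rw [hdl]
      calc C ^ n * dist (f i x) x ≤ C ^ n * M :=
            mul_le_mul_of_nonneg_left (hMb i x hx) (pow_nonneg hC0 n)
        _ = M * C ^ n := mul_comm _ _
  -- the sequence is Cauchy, hence converges
  have hcauchy : CauchySeq u := cauchySeq_of_le_geometric C M hC1 key
  obtain ⟨A, hA⟩ := cauchySeq_tendsto_of_complete hcauchy
  -- T is continuous along the sequence
  have hTA : Tendsto (fun n => T (u n)) atTop (nhds (T A)) := by
    rw [Metric.tendsto_atTop]
    intro ε hε
    have hδ : ∀ i : I, ∃ δ : ℝ, 0 < δ ∧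
        ∀ a b : X, dist a b < δ → a ∈ (A : Set X) → dist (f i a) (f i b) < ε / 2 := by
      intro i
      have hunif := A.isCompact.uniformContinuousAt_of_continuousAt (f i)
        (fun a _ => (hcont i).continuousAt) (dist_mem_uniformity (half_pos hε))
      rcases Metric.mem_uniformity_dist.1 hunif with ⟨δ, hδpos, hδ⟩
      exact ⟨δ, hδpos, fun a b hab ha => hδ hab ha⟩
    choose δ hδpos hδ using hδ
    obtain ⟨i1, hi1⟩ := Finite.exists_min δ
    obtain ⟨N, hN⟩ := (Metric.tendsto_atTop.1 hA) (δ i1) (hδpos i1)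
    refine ⟨N, fun n hn => ?_⟩
    have hdist : ∀ i : I, hausdorffDist ((u n) : Set X) (A : Set X) < δ i :=
      fun i => lt_of_lt_of_le (hN n hn) (hi1 i)
    have hnetop : EMetric.hausdorffEdist ((u n) : Set X) (A : Set X) ≠ ⊤ :=
      hausdorffEdist_ne_top_of_nonempty_of_bounded (u n).nonempty A.nonempty
        (u n).isCompact.isBounded A.isCompact.isBounded
    have hle : dist (T (u n)) (T A) ≤ ε / 2 := by
      rw [Metric.NonemptyCompacts.dist_eq]
      apply hausdorffDist_le_of_mem_dist (le_of_lt (half_pos hε))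
      · rintro p hp
        rcases Set.mem_iUnion.1 hp with ⟨i, b, hb, rfl⟩
        obtain ⟨a, ha, hba⟩ := exists_dist_lt_of_hausdorffDist_lt hb (hdist i) hnetop
        refine ⟨f i a, Set.mem_iUnion.2 ⟨i, Set.mem_image_of_mem _ ha⟩, ?_⟩
        have := hδ i a b (by rwa [dist_comm]) ha
        rw [dist_comm]
        exact le_of_lt this
      · rintro p hp
        rcases Set.mem_iUnion.1 hp with ⟨i, a, ha, rfl⟩
        obtain ⟨b, hb, hab⟩ := exists_dist_lt_of_hausdorffDist_lt' ha (hdist i) hnetop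
        refine ⟨f i b, Set.mem_iUnion.2 ⟨i, Set.mem_image_of_mem _ hb⟩, ?_⟩
        rw [dist_comm] at hab
        exact le_of_lt (hδ i a b hab ha)
    exact lt_of_le_of_lt hle (half_lt_self hε)
  -- hence T A = A
  have hshift : Tendsto (fun n => u (n + 1)) atTop (nhds A) :=
    hA.comp (tendsto_add_atTop_nat 1)
  have hfix : T A = A := by
    apply tendsto_nhds_unique (l := atTop (α := ℕ)) _ hshift
    simpa only [hTu] using hTA
  refine ⟨(A : Set X), A.isCompact, A.nonempty, ?_, ?_⟩
  · exact congrArg (fun s : TopologicalSpace.NonemptyCompacts X => (s : Set X)) hfix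
  · have := tendsto_iff_dist_tendsto_zero.1 hA
    simp only [Metric.NonemptyCompacts.dist_eq] at this
    exact this
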